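/- arXiv:1110.6230 — 4 statements merged into one kernel-verified Lean document; each statement's English description precedes it below -/
import Mathlib

section
/- Let α_d = d·I_{1/2}(1/(d−2), (d−1)/(d−2)) − (d−1) for integers d ≥ 3, where I_x(a,b) is the regularized incomplete beta function. Then lim_{d→∞} α_d = 1 − ln 2. -/
open Real MeasureTheory intervalIntegral Filter

/-- The regularized incomplete beta function `I_x(a,b)`. -/
noncomputable def regIncBeta (x a b : ℝ) : ℝ :=
  (Real.Gamma (a + b) / (Real.Gamma a * Real.Gamma b)) *
    ∫ t in (0:ℝ)..x, t ^ (a - 1) * (1 - t) ^ (b - 1)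

lemma contOn_aux {c : ℝ} :
    ContinuousOn (fun t : ℝ => (1 - t) ^ (c : ℝ)) (Set.uIcc (0:ℝ) (1/2)) := by
  apply ContinuousOn.rpow_const (continuous_const.sub continuous_id).continuousOn
  intro t ht
  rw [Set.uIcc_of_le (by norm_num : (0:ℝ) ≤ 1/2)] at ht
  left
  intro h
  simp only [Pi.sub_apply, id_eq] at h
  nlinarith [ht.2]

lemma int_rpow_mul {a c : ℝ} (ha : -1 < a) :
    IntervalIntegrable (fun t : ℝ => t ^ a * (1 - t) ^ c) volume 0 (1/2) :=
  (intervalIntegrable_rpow' ha).mul_continuousOn contOn_aux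

lemma real_beta {a : ℝ} (ha : 0 < a) :
    Real.Gamma a * Real.Gamma a
      = Real.Gamma (2*a) * ∫ t in (0:ℝ)..1, t ^ (a-1) * (1-t) ^ (a-1) := by
  have h := Complex.Gamma_mul_Gamma_eq_betaIntegral (s := (a:ℂ)) (t := (a:ℂ))
    (by simpa using ha) (by simpa using ha)
  have hb : Complex.betaIntegral a a
      = ((∫ t in (0:ℝ)..1, t ^ (a-1) * (1-t) ^ (a-1)) : ℝ) := by
    rw [Complex.betaIntegral, ← intervalIntegral.integral_ofReal]
    apply intervalIntegral.integral_congr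
    intro x hx
    rw [Set.uIcc_of_le (by norm_num : (0:ℝ) ≤ 1)] at hx
    push_cast
    rw [Complex.ofReal_cpow hx.1, Complex.ofReal_cpow (by linarith [hx.2] : (0:ℝ) ≤ 1 - x)]
    push_cast
    ring
  rw [hb] at h
  have h2 : ((a:ℂ) + a) = ((2*a : ℝ) : ℂ) := by push_cast; ring
  rw [h2, Complex.Gamma_ofReal, Complex.Gamma_ofReal] at h
  exact_mod_cast h

lemma alpha_identity {a : ℝ} (ha : 0 < a) :
    (2 + 1/a) * regIncBeta (1/2) a (1 + a) - (1 + 1/a)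
      = 1 - ((2*a+1) * (Real.Gamma (2*a+1) / Real.Gamma (1+a) ^ 2))
          * ∫ t in (0:ℝ)..(1/2), t ^ a * (1 - t) ^ (a - 1) := by
  set K := ∫ t in (0:ℝ)..(1/2), t ^ a * (1 - t) ^ (a - 1) with hK
  set L := ∫ t in (0:ℝ)..(1/2), t ^ (a-1) * (1 - t) ^ (a - 1) with hLdef
  have int_L : IntervalIntegrable (fun t : ℝ => t ^ (a-1) * (1 - t) ^ (a-1)) volume 0 (1/2) :=
    int_rpow_mul (by linarith)
  have int_K : IntervalIntegrable (fun t : ℝ => t ^ a * (1 - t) ^ (a-1)) volume 0 (1/2) :=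
    int_rpow_mul (by linarith)
  -- the incomplete-beta integral splits
  have hJ : (∫ t in (0:ℝ)..(1/2), t ^ (a-1) * (1 - t) ^ ((1+a) - 1)) = L - K := by
    rw [hLdef, hK, ← intervalIntegral.integral_sub int_L int_K]
    apply intervalIntegral.integral_congr
    intro t ht
    rw [Set.uIcc_of_le (by norm_num : (0:ℝ) ≤ 1/2)] at ht
    have h1t : (0:ℝ) < 1 - t := by linarith [ht.2]
    have e1 : (1-t) ^ ((1+a) - 1) = (1-t) ^ (a-1) * (1-t) := by
      rw [show (1+a) - 1 = (a-1) + 1 by ring, Real.rpow_add_one h1t.ne']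
    have e3 : t ^ (a-1) * t = t ^ a := by
      rcases eq_or_lt_of_le ht.1 with h | h
      · rw [← h]
        rw [Real.zero_rpow ha.ne']
        ring
      · rw [← Real.rpow_add_one h.ne']
        ring_nf
    show t ^ (a-1) * (1-t) ^ ((1+a) - 1)
        = t ^ (a-1) * (1-t) ^ (a-1) - t ^ a * (1-t) ^ (a-1)
    rw [e1, ← e3]
    ring
  -- symmetry: the beta integral over [1/2,1] equals L
  have int_R : IntervalIntegrable (fun t : ℝ => t ^ (a-1) * (1 - t) ^ (a-1)) volume (1/2) 1 := by
    have h := (int_rpow_mul (a := a-1) (c := a-1) (by linarith)).comp_sub_left 1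
    rw [show (1:ℝ)-0 = 1 by norm_num, show (1:ℝ)-1/2 = 1/2 by norm_num] at h
    apply h.symm.congr
    intro t ht
    simp only [sub_sub_cancel]
    ring
  have hsym : (∫ t in (1/2:ℝ)..1, t ^ (a-1) * (1 - t) ^ (a-1)) = L := by
    have h := intervalIntegral.integral_comp_sub_left
      (a := (0:ℝ)) (b := 1/2) (fun t : ℝ => t ^ (a-1) * (1 - t) ^ (a-1)) 1
    norm_num at h
    rw [← h, hLdef]
    apply intervalIntegral.integral_congr
    intro t ht
    simp only [sub_sub_cancel]
    ring
  have hsplit : (∫ t in (0:ℝ)..1, t ^ (a-1) * (1 - t) ^ (a-1)) = 2 * L := by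
    rw [← intervalIntegral.integral_add_adjacent_intervals int_L int_R, hsym, hLdef]
    ring
  have hbeta := real_beta ha
  rw [hsplit] at hbeta
  -- positivity facts
  have hga : 0 < Real.Gamma a := Real.Gamma_pos_of_pos ha
  have hg2a : 0 < Real.Gamma (2*a) := Real.Gamma_pos_of_pos (by linarith)
  have hgam1 : Real.Gamma (1+a) = a * Real.Gamma a := by
    rw [add_comm, Real.Gamma_add_one ha.ne']
  have hgam2 : Real.Gamma (2*a+1) = 2*a * Real.Gamma (2*a) := by
    rw [Real.Gamma_add_one (by positivity)]
  have hLval : L = Real.Gamma a * Real.Gamma a / (2 * Real.Gamma (2*a)) := by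
    field_simp
    linarith [hbeta]
  rw [regIncBeta, show a + (1 + a) = 2*a+1 by ring, hJ, hLval, hgam1, hgam2]
  field_simp
  ring

lemma a_tendsto : Tendsto (fun d : ℕ => 1/((d:ℝ)-2)) atTop (nhds 0) := by
  have h : Tendsto (fun d : ℕ => (d:ℝ)-2) atTop atTop := by
    simpa [sub_eq_add_neg] using
      tendsto_atTop_add_const_right atTop (-2 : ℝ) tendsto_natCast_atTop_atTop
  simpa [one_div, Pi.inv_def] using h.inv_tendsto_atTop

lemma G_tendsto :
    Tendsto (fun d : ℕ => (2*(1/((d:ℝ)-2))+1)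
        * (Real.Gamma (2*(1/((d:ℝ)-2))+1) / Real.Gamma (1+(1/((d:ℝ)-2))) ^ 2))
      atTop (nhds 1) := by
  have h1ne : ∀ m : ℕ, (1:ℝ) ≠ -m := by
    intro m h
    have : (0:ℝ) ≤ (m:ℝ) := Nat.cast_nonneg m
    linarith
  have hc1 : ContinuousAt Real.Gamma 1 := (Real.differentiableAt_Gamma h1ne).continuousAt
  have hca : ContinuousAt (fun x : ℝ => Real.Gamma (2*x+1)) 0 := by
    apply ContinuousAt.comp (g := Real.Gamma) (f := fun x : ℝ => 2*x+1)
    · simpa using hc1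
    · fun_prop
  have hcb : ContinuousAt (fun x : ℝ => Real.Gamma (1+x)) 0 := by
    apply ContinuousAt.comp (g := Real.Gamma) (f := fun x : ℝ => 1+x)
    · simpa using hc1
    · fun_prop
  have hG : ContinuousAt
      (fun x : ℝ => (2*x+1) * (Real.Gamma (2*x+1) / Real.Gamma (1+x) ^ 2)) 0 := by
    apply ContinuousAt.mul (by fun_prop)
    apply ContinuousAt.div hca (hcb.pow 2)
    simp [Real.Gamma_one]
  have := hG.tendsto.comp a_tendsto
  simpa [Real.Gamma_one, Function.comp_def] using this

lemma K_tendsto :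
    Tendsto (fun d : ℕ => ∫ t in (0:ℝ)..(1/2),
        t ^ (1/((d:ℝ)-2)) * (1-t) ^ (1/((d:ℝ)-2) - 1))
      atTop (nhds (Real.log 2)) := by
  have hval : (∫ t in (0:ℝ)..(1/2), (1-t)⁻¹) = Real.log 2 := by
    have h := intervalIntegral.integral_comp_sub_left (a := (0:ℝ)) (b := 1/2)
      (fun x : ℝ => x⁻¹) 1
    rw [h, show (1:ℝ)-(1/2) = 1/2 by norm_num, show (1:ℝ)-0 = 1 by norm_num,
      integral_inv (by rw [Set.uIcc_of_le (by norm_num)]; norm_num)]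
    norm_num
  rw [← hval]
  apply intervalIntegral.tendsto_integral_filter_of_dominated_convergence
    (bound := fun _ => 2)
  · filter_upwards with d
    apply Measurable.aestronglyMeasurable
    fun_prop
  · filter_upwards [eventually_ge_atTop 3] with d hd
    have hd3 : (3:ℝ) ≤ (d:ℝ) := by exact_mod_cast hd
    set a : ℝ := 1/((d:ℝ)-2) with ha_def
    have ha : 0 < a := by rw [ha_def]; exact div_pos one_pos (by linarith)
    have ha1 : a ≤ 1 := by
      rw [ha_def]
      rw [div_le_one (by linarith)]
      linarith
    apply ae_of_all
    intro t ht
    rw [Set.uIoc_of_le (by norm_num : (0:ℝ) ≤ 1/2)] at ht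
    obtain ⟨ht0, ht1⟩ := ht
    have hb1 : t ^ a ≤ 1 := Real.rpow_le_one ht0.le (by linarith) ha.le
    have hb2 : (1-t) ^ (a-1) ≤ 2 := by
      have h1 : (1-t) ^ (a-1) ≤ ((1:ℝ)/2) ^ (a-1) :=
        Real.rpow_le_rpow_of_nonpos (by norm_num) (by linarith) (by linarith)
      have h2 : ((1:ℝ)/2) ^ (a-1) ≤ ((1:ℝ)/2) ^ (-1:ℝ) :=
        Real.rpow_le_rpow_of_exponent_ge (by norm_num) (by norm_num) (by linarith)
      have h3 : ((1:ℝ)/2) ^ (-1:ℝ) = 2 := by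
        rw [Real.rpow_neg_one]; norm_num
      linarith
    have hpos1 : (0:ℝ) ≤ t ^ a := Real.rpow_nonneg ht0.le a
    have hpos2 : (0:ℝ) ≤ (1-t) ^ (a-1) := Real.rpow_nonneg (by linarith) _
    rw [Real.norm_eq_abs, abs_of_nonneg (by positivity)]
    calc t ^ a * (1-t) ^ (a-1) ≤ 1 * 2 := by
          apply mul_le_mul hb1 hb2 hpos2 (by norm_num)
      _ = 2 := by norm_num
  · exact intervalIntegrable_const
  · apply ae_of_all
    intro t ht
    rw [Set.uIoc_of_le (by norm_num : (0:ℝ) ≤ 1/2)] at ht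
    obtain ⟨ht0, ht1⟩ := ht
    have h1t : (0:ℝ) < 1 - t := by linarith
    have h1 : Tendsto (fun d : ℕ => t ^ (1/((d:ℝ)-2))) atTop (nhds 1) := by
      have hc : ContinuousAt (fun x : ℝ => t ^ x) 0 :=
        Real.continuousAt_const_rpow ht0.ne'
      have := hc.tendsto.comp a_tendsto
      simpa [Function.comp_def] using this
    have h2 : Tendsto (fun d : ℕ => (1-t) ^ (1/((d:ℝ)-2) - 1)) atTop
        (nhds ((1-t)⁻¹)) := by
      have hc : ContinuousAt (fun x : ℝ => (1-t) ^ x) (-1) :=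
        Real.continuousAt_const_rpow h1t.ne'
      have hsub : Tendsto (fun d : ℕ => 1/((d:ℝ)-2) - 1) atTop (nhds (-1)) := by
        simpa using a_tendsto.sub_const 1
      have := hc.tendsto.comp hsub
      simpa [Real.rpow_neg_one, Function.comp_def] using this
    simpa using h1.mul h2

/-- `α_d = d·I_{1/2}(1/(d−2), (d−1)/(d−2)) − (d−1)` tends to `1 − ln 2` as `d → ∞`. -/
theorem alpha_tendsto_one_sub_log_two :
    Filter.Tendsto
      (fun d : ℕ =>
        (d : ℝ) * regIncBeta (1/2) (1 / ((d : ℝ) - 2)) (((d : ℝ) - 1) / ((d : ℝ) - 2))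
          - ((d : ℝ) - 1))
      Filter.atTop (nhds (1 - Real.log 2)) := by
  have hlim := (tendsto_const_nhds (x := (1:ℝ)) (f := atTop)).sub (G_tendsto.mul K_tendsto)
  rw [one_mul] at hlim
  apply hlim.congr'
  filter_upwards [eventually_ge_atTop 3] with d hd
  have hd3 : (3:ℝ) ≤ (d:ℝ) := by exact_mod_cast hd
  have hd2 : (0:ℝ) < (d:ℝ) - 2 := by linarith
  set a : ℝ := 1/((d:ℝ)-2) with ha_def
  have ha : 0 < a := by rw [ha_def]; exact div_pos one_pos (by linarith)
  have h1 : ((d:ℝ)-1)/((d:ℝ)-2) = 1 + a := by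
    rw [ha_def]; field_simp; ring
  have h2 : (d:ℝ) = 2 + 1/a := by
    rw [ha_def, one_div_one_div]; ring
  have h3 : (d:ℝ) - 1 = 1 + 1/a := by
    rw [ha_def, one_div_one_div]; ring
  rw [h1, h3, h2]
  exact (alpha_identity ha).symm
end

section
/- For every integer d ≥ 3, the quantity α_d = d·I_{1/2}(1/(d−2), (d−1)/(d−2)) − (d−1) is strictly positive. -/
set_option maxHeartbeats 800000

open Real intervalIntegral MeasureTheory

lemma realBeta {a b : ℝ} (ha : 0 < a) (hb : 0 < b) :
    Real.Gamma a * Real.Gamma b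
      = Real.Gamma (a + b) * ∫ t in (0:ℝ)..1, t ^ (a-1) * (1-t) ^ (b-1) := by
  have h := Complex.Gamma_mul_Gamma_eq_betaIntegral (s := (a:ℂ)) (t := (b:ℂ))
      (by simpa using ha) (by simpa using hb)
  have hint : Complex.betaIntegral a b
      = ((∫ t in (0:ℝ)..1, t ^ (a-1) * (1-t) ^ (b-1) : ℝ) : ℂ) := by
    rw [Complex.betaIntegral, ← intervalIntegral.integral_ofReal]
    apply intervalIntegral.integral_congr
    intro x hx
    rw [Set.uIcc_of_le (by norm_num : (0:ℝ) ≤ 1)] at hx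
    push_cast
    rw [Complex.ofReal_cpow hx.1, Complex.ofReal_cpow (by linarith [hx.2] : (0:ℝ) ≤ 1 - x)]
    push_cast
    ring
  rw [hint, Complex.Gamma_ofReal, Complex.Gamma_ofReal, ← Complex.ofReal_add,
    Complex.Gamma_ofReal] at h
  exact_mod_cast h

/-- For every integer `d ≥ 3`, `α_d > 0`. -/
theorem alpha_pos (d : ℕ) (hd : 3 ≤ d) :
    0 < (d : ℝ) * regIncBeta (1/2) (1 / ((d : ℝ) - 2)) (((d : ℝ) - 1) / ((d : ℝ) - 2))
        - ((d : ℝ) - 1) := by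
  have hD : (3:ℝ) ≤ (d:ℝ) := by exact_mod_cast hd
  set D := (d:ℝ) with hDdef
  have hD2 : (0:ℝ) < D - 2 := by linarith
  set a := 1/(D-2) with hadef
  have ha : 0 < a := by positivity
  have ha1 : a ≤ 1 := by rw [hadef, div_le_one hD2]; linarith
  have haD : a * (D-2) = 1 := by rw [hadef]; field_simp
  have hb1 : (D-1)/(D-2) = a + 1 := by rw [hadef]; field_simp; ring
  -- continuity facts
  have h1 : Continuous fun x : ℝ => x ^ a :=
    continuous_iff_continuousAt.2 fun x => Real.continuousAt_rpow_const x a (Or.inr ha.le)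
  have h2 : Continuous fun t : ℝ => (1-t) ^ a := h1.comp (continuous_const.sub continuous_id)
  -- integrability of the main integrand
  have intf : ∀ u v : ℝ, IntervalIntegrable (fun t => t^(a-1) * (1-t)^a) volume u v :=
    fun u v => (intervalIntegrable_rpow' (by linarith)).mul_continuousOn h2.continuousOn
  -- continuity of the reflected integrand on [0,1/2]
  have contg : ContinuousOn (fun s : ℝ => s^a * (1-s)^(a-1)) (Set.uIcc 0 (1/2)) := by
    rw [Set.uIcc_of_le (by norm_num : (0:ℝ) ≤ 1/2)]
    refine h1.continuousOn.mul (ContinuousOn.rpow_const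
      ((continuous_const.sub continuous_id).continuousOn) fun x hx => Or.inl ?_)
    have := hx.2
    intro h; simp at this ⊢; nlinarith [h]
  have intg : IntervalIntegrable (fun s : ℝ => s^a * (1-s)^(a-1)) volume 0 (1/2) :=
    contg.intervalIntegrable
  set J := ∫ t in (0:ℝ)..(1/2), t^(a-1) * (1-t)^a with hJdef
  set Lp := ∫ s in (0:ℝ)..(1/2), s^a * (1-s)^(a-1) with hLpdef
  set B1 := ∫ t in (0:ℝ)..1, t^(a-1) * (1-t)^a with hB1def
  set δ := (1/2:ℝ)^(2*a) with hδdef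
  have hδpos : 0 < δ := Real.rpow_pos_of_pos (by norm_num) _
  -- symmetry
  have hsymm : (∫ t in (1/2:ℝ)..1, t^(a-1) * (1-t)^a) = Lp := by
    have h := intervalIntegral.integral_comp_sub_left
      (a := 0) (b := 1/2) (fun t => t^(a-1) * (1-t)^a) 1
    norm_num at h
    rw [← h, hLpdef]
    apply intervalIntegral.integral_congr
    intro x hx
    simp only [sub_sub_cancel]
    ring
  have hB1eq : B1 = J + Lp := by
    rw [hB1def, ← intervalIntegral.integral_add_adjacent_intervals
      (intf 0 (1/2)) (intf (1/2) 1), hsymm]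
  -- FTC : a*J - a*Lp = δ
  have hftc : a*J - a*Lp = δ := by
    have hderiv : ∀ t ∈ Set.Ioo (0:ℝ) (1/2),
        HasDerivAt (fun t : ℝ => t^a * (1-t)^a)
          (a * (t^(a-1) * (1-t)^a) - a * (t^a * (1-t)^(a-1))) t := by
      intro t ht
      have h₁ : HasDerivAt (fun t : ℝ => t^a) (a * t^(a-1)) t :=
        Real.hasDerivAt_rpow_const (Or.inl ht.1.ne')
      have hb : HasDerivAt (fun t : ℝ => 1 - t) (-1) t := (hasDerivAt_id t).const_sub 1
      have h₂ : HasDerivAt (fun t : ℝ => (1-t)^a) (a * (1-t)^(a-1) * (-1)) t :=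
        (Real.hasDerivAt_rpow_const (x := 1-t) (p := a)
          (Or.inl (by have := ht.2; intro h; nlinarith))).comp t hb
      refine (h₁.mul h₂).congr_deriv ?_
      ring
    have hcont : ContinuousOn (fun t : ℝ => t^a * (1-t)^a) (Set.Icc 0 (1/2)) :=
      (h1.mul h2).continuousOn
    have hint' : IntervalIntegrable
        (fun t : ℝ => a * (t^(a-1) * (1-t)^a) - a * (t^a * (1-t)^(a-1))) volume 0 (1/2) :=
      ((intf 0 (1/2)).const_mul a).sub (intg.const_mul a)
    have heq := intervalIntegral.integral_eq_sub_of_hasDerivAt_of_le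
      (by norm_num : (0:ℝ) ≤ 1/2) hcont hderiv hint'
    rw [intervalIntegral.integral_sub ((intf 0 (1/2)).const_mul a) (intg.const_mul a),
      intervalIntegral.integral_const_mul, intervalIntegral.integral_const_mul] at heq
    rw [heq]
    have h12 : (1:ℝ) - 1/2 = 1/2 := by norm_num
    rw [h12, Real.zero_rpow ha.ne', zero_mul, sub_zero,
      ← Real.rpow_add (by norm_num : (0:ℝ) < 1/2), hδdef, two_mul]
  -- bound : Lp ≤ δ/(a+1)
  have hLple : Lp ≤ δ / (a+1) := by
    have hmono : Lp ≤ ∫ s in (0:ℝ)..(1/2), (1/2:ℝ)^(a-1) * s^a := by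
      apply intervalIntegral.integral_mono_on (by norm_num) intg
        ((intervalIntegrable_rpow' (by linarith)).const_mul _)
      intro s hs
      have h1s : (1:ℝ)/2 ≤ 1 - s := by linarith [hs.2]
      have hle := Real.rpow_le_rpow_of_nonpos (by norm_num : (0:ℝ) < 1/2) h1s
        (by linarith : a - 1 ≤ 0)
      calc s^a * (1-s)^(a-1) ≤ s^a * (1/2:ℝ)^(a-1) :=
            mul_le_mul_of_nonneg_left hle (Real.rpow_nonneg hs.1 a)
        _ = (1/2:ℝ)^(a-1) * s^a := mul_comm _ _
    have hcomp : (∫ s in (0:ℝ)..(1/2), (1/2:ℝ)^(a-1) * s^a) = δ / (a+1) := by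
      rw [intervalIntegral.integral_const_mul, integral_rpow (Or.inl (by linarith : (-1:ℝ) < a)),
        Real.zero_rpow (by linarith : a + 1 ≠ 0), sub_zero, hδdef,
        ← mul_div_assoc, ← Real.rpow_add (by norm_num : (0:ℝ) < 1/2)]
      ring_nf
    linarith [hmono, hcomp.le, hcomp.ge]
  have hLp0 : 0 ≤ Lp := by
    apply intervalIntegral.integral_nonneg (by norm_num)
    intro s hs
    exact mul_nonneg (Real.rpow_nonneg hs.1 _) (Real.rpow_nonneg (by linarith [hs.2]) _)
  -- Gamma prefactor
  have hJval : J = Lp + δ/a := by field_simp at hftc ⊢; linarith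
  have hB1pos : 0 < B1 := by rw [hB1eq, hJval]; positivity
  have hGa : 0 < Real.Gamma (a + (a+1)) := Real.Gamma_pos_of_pos (by linarith)
  have hbeta := realBeta ha (by linarith : (0:ℝ) < a + 1)
  simp only [add_sub_cancel_right] at hbeta
  rw [← hB1def] at hbeta
  clear_value J Lp B1 δ
  -- rewrite the goal
  rw [regIncBeta, hb1]
  simp only [add_sub_cancel_right]
  rw [← hJdef]
  have hpre : Real.Gamma (a + (a+1)) / (Real.Gamma a * Real.Gamma (a+1)) = 1 / B1 := by
    rw [hbeta]
    rw [div_mul_eq_div_div, div_self hGa.ne']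
  rw [hpre]
  have hkey : D * (1/B1 * J) - (D-1) = (D*J - (D-1)*B1) / B1 := by
    field_simp
  rw [hkey]
  apply div_pos _ hB1pos
  have hδLp : Lp < δ := by
    have : δ/(a+1) < δ := by
      rw [div_lt_iff₀ (by linarith)]
      nlinarith
    linarith
  have hexp : D*J - (D-1)*B1 = δ/a - (D-2)*Lp := by
    rw [hB1eq, hJval]; ring
  have hD2a : D - 2 = 1/a := by
    rw [hadef, one_div_one_div]
  rw [hexp, hD2a]
  have hfin : δ/a - 1/a*Lp = (δ - Lp)/a := by ring
  rw [hfin]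
  exact div_pos (by linarith) ha
end

section
/- For all integers d ≥ 3 and k ≥ 2, the expression P_k = I_{1/2}(k−1+1/(d−2), 1+1/(d−2)) + (d−1)(I_{1/2}(1/(d−2), k+1/(d−2)) − 1) satisfies P_k ≤ 4e²·k(k+1)/(k−1)·(1/2)^{k−1}. -/
open Real MeasureTheory Set

private lemma complexBeta_eq (u v : ℝ) (hu : 0 < u) (hv : 0 < v) :
    Complex.betaIntegral u v =
      ((∫ t in (0:ℝ)..1, t ^ (u-1) * (1-t) ^ (v-1) : ℝ) : ℂ) := by
  rw [Complex.betaIntegral, ← intervalIntegral.integral_ofReal]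
  apply intervalIntegral.integral_congr
  intro t ht
  rw [Set.uIcc_of_le (by norm_num : (0:ℝ) ≤ 1)] at ht
  obtain ⟨h0, h1⟩ := ht
  dsimp only
  rw [Complex.ofReal_mul, Complex.ofReal_cpow h0, Complex.ofReal_cpow (by linarith : (0:ℝ) ≤ 1 - t)]
  push_cast
  ring

private lemma betaInt_integrable (u v : ℝ) (hu : 0 < u) (hv : 0 < v) :
    IntervalIntegrable (fun t : ℝ => t ^ (u-1) * (1-t) ^ (v-1)) volume 0 1 := by
  have hc : IntervalIntegrable
      (fun x : ℝ => (x:ℂ) ^ ((u:ℂ)-1) * ((1:ℂ)-(x:ℂ)) ^ ((v:ℂ)-1)) volume 0 1 :=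
    Complex.betaIntegral_convergent (by simpa using hu) (by simpa using hv)
  rw [intervalIntegrable_iff] at hc ⊢
  have heq : Set.EqOn (fun x : ℝ => (x:ℂ) ^ ((u:ℂ)-1) * ((1:ℂ)-(x:ℂ)) ^ ((v:ℂ)-1))
      (fun t : ℝ => ((t ^ (u-1) * (1-t) ^ (v-1) : ℝ) : ℂ)) (Set.uIoc (0:ℝ) 1) := by
    intro t ht
    rw [Set.uIoc_of_le (by norm_num : (0:ℝ) ≤ 1)] at ht
    obtain ⟨h0, h1⟩ := ht
    dsimp only
    rw [Complex.ofReal_mul, Complex.ofReal_cpow h0.le, Complex.ofReal_cpow (by linarith : (0:ℝ) ≤ 1 - t)]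
    push_cast
    ring
  have hc2 := hc.congr_fun heq measurableSet_uIoc
  have := hc2.re
  simpa [IntegrableOn] using this

private lemma betaInt_eq (u v : ℝ) (hu : 0 < u) (hv : 0 < v) :
    Real.Gamma u * Real.Gamma v
      = Real.Gamma (u+v) * ∫ t in (0:ℝ)..1, t ^ (u-1) * (1-t) ^ (v-1) := by
  have h := Complex.Gamma_mul_Gamma_eq_betaIntegral (s := (u:ℂ)) (t := (v:ℂ))
    (by simpa using hu) (by simpa using hv)
  rw [complexBeta_eq u v hu hv, ← Complex.ofReal_add, Complex.Gamma_ofReal,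
    Complex.Gamma_ofReal, Complex.Gamma_ofReal, ← Complex.ofReal_mul, ← Complex.ofReal_mul,
    Complex.ofReal_inj] at h
  exact h

private lemma betaInt_pos (u v : ℝ) (hu : 0 < u) (hv : 0 < v) :
    0 < ∫ t in (0:ℝ)..1, t ^ (u-1) * (1-t) ^ (v-1) := by
  have h := betaInt_eq u v hu hv
  have h1 : 0 < Real.Gamma u * Real.Gamma v :=
    mul_pos (Real.Gamma_pos_of_pos hu) (Real.Gamma_pos_of_pos hv)
  have h2 : 0 < Real.Gamma (u+v) := Real.Gamma_pos_of_pos (by linarith)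
  nlinarith [h1, h2, h]

private lemma half_le_one (u v : ℝ) (hu : 0 < u) (hv : 0 < v) :
    (∫ t in (0:ℝ)..(1/2), t ^ (u-1) * (1-t) ^ (v-1))
      ≤ ∫ t in (0:ℝ)..1, t ^ (u-1) * (1-t) ^ (v-1) := by
  apply intervalIntegral.integral_mono_interval le_rfl (by norm_num) (by norm_num)
  · filter_upwards [MeasureTheory.ae_restrict_mem measurableSet_Ioc] with t ht
    exact mul_nonneg (Real.rpow_nonneg ht.1.le _) (Real.rpow_nonneg (by linarith [ht.2]) _)
  · exact betaInt_integrable u v hu hv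

private lemma regIncBeta_half_le_one (u v : ℝ) (hu : 0 < u) (hv : 0 < v) :
    regIncBeta (1/2) u v ≤ 1 := by
  have hB := betaInt_eq u v hu hv
  have hGu := Real.Gamma_pos_of_pos hu
  have hGv := Real.Gamma_pos_of_pos hv
  have hGuv := Real.Gamma_pos_of_pos (show 0 < u + v by linarith)
  have hpref : 0 < Real.Gamma (u+v) / (Real.Gamma u * Real.Gamma v) := by positivity
  have h1 : regIncBeta (1/2) u v ≤ (Real.Gamma (u+v) / (Real.Gamma u * Real.Gamma v)) *
      ∫ t in (0:ℝ)..1, t ^ (u-1) * (1-t) ^ (v-1) := by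
    unfold regIncBeta
    exact mul_le_mul_of_nonneg_left (half_le_one u v hu hv) hpref.le
  have h2 : (Real.Gamma (u+v) / (Real.Gamma u * Real.Gamma v)) *
      (∫ t in (0:ℝ)..1, t ^ (u-1) * (1-t) ^ (v-1)) = 1 := by
    rw [div_mul_eq_mul_div, ← hB]
    field_simp
  linarith

private lemma term1_bound (u v : ℝ) (hu : 1 ≤ u) (hv0 : 1 < v) (hv1 : v ≤ 2) :
    regIncBeta (1/2) u v ≤ (u + 1) * (1/2) ^ u := by
  have hu0 : 0 < u := by linarith
  have hv0' : 0 < v := by linarith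
  -- integrability facts
  have hglob := betaInt_integrable u v hu0 hv0'
  have hsub : IntervalIntegrable (fun t : ℝ => t ^ (u-1) * (1-t) ^ (v-1)) volume 0 (1/2) := by
    apply hglob.mono_set
    rw [Set.uIcc_of_le (by norm_num : (0:ℝ) ≤ 1/2), Set.uIcc_of_le (by norm_num : (0:ℝ) ≤ 1)]
    exact Set.Icc_subset_Icc le_rfl (by norm_num)
  have hr1 : IntervalIntegrable (fun t : ℝ => t ^ (u-1)) volume 0 (1/2) :=
    intervalIntegral.intervalIntegrable_rpow' (by linarith)
  -- Step A : ∫_0^{1/2} ≤ (1/2)^u / u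
  have hA : (∫ t in (0:ℝ)..(1/2), t ^ (u-1) * (1-t) ^ (v-1)) ≤ (1/2) ^ u / u := by
    have hmono : (∫ t in (0:ℝ)..(1/2), t ^ (u-1) * (1-t) ^ (v-1))
        ≤ ∫ t in (0:ℝ)..(1/2), t ^ (u-1) := by
      apply intervalIntegral.integral_mono_on (by norm_num) hsub hr1
      intro t ht
      obtain ⟨h0, h1⟩ := ht
      have : (1-t) ^ (v-1) ≤ 1 :=
        Real.rpow_le_one (by linarith) (by linarith) (by linarith)
      calc t ^ (u-1) * (1-t) ^ (v-1) ≤ t ^ (u-1) * 1 :=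
            mul_le_mul_of_nonneg_left this (Real.rpow_nonneg h0 _)
        _ = t ^ (u-1) := mul_one _
    have hval : (∫ t in (0:ℝ)..(1/2), t ^ (u-1)) = (1/2) ^ u / u := by
      rw [integral_rpow (Or.inl (by linarith : (-1:ℝ) < u - 1))]
      have h1 : u - 1 + 1 = u := by ring
      rw [h1, Real.zero_rpow (by linarith : u ≠ 0)]
      ring
    linarith
  -- Step B : ∫_0^1 ≥ 1/(u*(u+1))
  have hBlow : 1/(u*(u+1)) ≤ ∫ t in (0:ℝ)..1, t ^ (u-1) * (1-t) ^ (v-1) := by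
    have hlowint : IntervalIntegrable (fun t : ℝ => t ^ (u-1) * (1-t)) volume 0 1 :=
      (intervalIntegral.intervalIntegrable_rpow' (by linarith)).mul_continuousOn
        (by fun_prop)
    have hmono : (∫ t in (0:ℝ)..1, t ^ (u-1) * (1-t))
        ≤ ∫ t in (0:ℝ)..1, t ^ (u-1) * (1-t) ^ (v-1) := by
      apply intervalIntegral.integral_mono_on (by norm_num) hlowint hglob
      intro t ht
      obtain ⟨h0, h1⟩ := ht
      rcases eq_or_lt_of_le (by linarith : (0:ℝ) ≤ 1 - t) with h | h
      · rw [← h, Real.zero_rpow (by linarith : v - 1 ≠ 0)]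
      · have : (1-t) ≤ (1-t) ^ (v-1) := by
          have := Real.rpow_le_rpow_of_exponent_ge h (by linarith) (by linarith : v - 1 ≤ 1)
          rwa [Real.rpow_one] at this
        exact mul_le_mul_of_nonneg_left this (Real.rpow_nonneg h0 _)
    have hval : (∫ t in (0:ℝ)..1, t ^ (u-1) * (1-t)) = 1/(u*(u+1)) := by
      have hcong : (∫ t in (0:ℝ)..1, t ^ (u-1) * (1-t))
          = ∫ t in (0:ℝ)..1, (t ^ (u-1) - t ^ u) := by
        apply intervalIntegral.integral_congr
        intro t ht
        rw [Set.uIcc_of_le (by norm_num : (0:ℝ) ≤ 1)] at ht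
        obtain ⟨h0, h1⟩ := ht
        dsimp only
        rcases eq_or_lt_of_le h0 with h | h
        · rw [← h, Real.zero_rpow (by linarith : u ≠ 0)]
          norm_num
        · have ht : t ^ u = t ^ (u-1) * t := by
            nth_rewrite 1 [show u = (u-1) + 1 by ring]
            rw [Real.rpow_add_one (ne_of_gt h)]
          rw [ht]; ring
      rw [hcong, intervalIntegral.integral_sub
        (intervalIntegral.intervalIntegrable_rpow' (by linarith))
        (intervalIntegral.intervalIntegrable_rpow' (by linarith)),
        integral_rpow (Or.inl (by linarith : (-1:ℝ) < u - 1)),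
        integral_rpow (Or.inl (by linarith : (-1:ℝ) < u))]
      rw [show u - 1 + 1 = u by ring, Real.one_rpow, Real.one_rpow,
        Real.zero_rpow (by linarith : u ≠ 0), Real.zero_rpow (by linarith : u + 1 ≠ 0)]
      field_simp
      ring
    linarith
  -- Step C : combine
  have hB := betaInt_eq u v hu0 hv0'
  have hGu := Real.Gamma_pos_of_pos hu0
  have hGv := Real.Gamma_pos_of_pos hv0'
  have hGuv := Real.Gamma_pos_of_pos (show 0 < u + v by linarith)
  set B := ∫ t in (0:ℝ)..1, t ^ (u-1) * (1-t) ^ (v-1) with hBdef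
  have hBpos : 0 < B := betaInt_pos u v hu0 hv0'
  have hpref : Real.Gamma (u+v) / (Real.Gamma u * Real.Gamma v) = 1 / B := by
    rw [hB]
    field_simp
  have hprefle : Real.Gamma (u+v) / (Real.Gamma u * Real.Gamma v) ≤ u * (u+1) := by
    rw [hpref, div_le_iff₀ hBpos]
    have h2 : 0 < u * (u+1) := by positivity
    rw [div_le_iff₀ h2] at hBlow
    linarith [mul_le_mul_of_nonneg_left hBlow (le_of_lt h2)]
  have hI1nonneg : 0 ≤ ∫ t in (0:ℝ)..(1/2), t ^ (u-1) * (1-t) ^ (v-1) := by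
    apply intervalIntegral.integral_nonneg (by norm_num)
    intro t ht
    exact mul_nonneg (Real.rpow_nonneg ht.1 _) (Real.rpow_nonneg (by linarith [ht.2]) _)
  have := mul_le_mul hprefle hA hI1nonneg (by positivity : (0:ℝ) ≤ u * (u+1))
  unfold regIncBeta
  calc (Real.Gamma (u+v) / (Real.Gamma u * Real.Gamma v)) *
        ∫ t in (0:ℝ)..(1/2), t ^ (u-1) * (1-t) ^ (v-1)
      ≤ u * (u+1) * ((1/2) ^ u / u) := this
    _ = (u + 1) * (1/2) ^ u := by field_simp

/-- Upper bound on the asymptotic probability of estimating the k-th infected node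
as the source, for d-regular trees. -/
theorem Pk_upper_bound (d k : ℕ) (hd : 3 ≤ d) (hk : 2 ≤ k) :
    regIncBeta (1/2) ((k : ℝ) - 1 + 1 / ((d : ℝ) - 2)) (1 + 1 / ((d : ℝ) - 2))
      + ((d : ℝ) - 1) *
        (regIncBeta (1/2) (1 / ((d : ℝ) - 2)) ((k : ℝ) + 1 / ((d : ℝ) - 2)) - 1)
    ≤ 4 * Real.exp 1 ^ 2 * ((k : ℝ) * ((k : ℝ) + 1) / ((k : ℝ) - 1)) * (1/2) ^ (k - 1) := by
  have hd3 : (3:ℝ) ≤ (d:ℝ) := by exact_mod_cast hd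
  have hk1 : (2:ℝ) ≤ (k:ℝ) := by exact_mod_cast hk
  set ε : ℝ := 1 / ((d:ℝ) - 2) with hεdef
  have hε0 : 0 < ε := by rw [hεdef]; exact div_pos one_pos (by linarith)
  have hε1 : ε ≤ 1 := by
    rw [hεdef, div_le_one (by linarith)]; linarith
  -- second term is ≤ 0
  have ht2 : ((d:ℝ) - 1) * (regIncBeta (1/2) ε ((k:ℝ) + ε) - 1) ≤ 0 := by
    have h := regIncBeta_half_le_one ε ((k:ℝ) + ε) hε0 (by linarith)
    exact mul_nonpos_iff.2 (Or.inl ⟨by linarith, by linarith⟩)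
  -- first term
  have hu1 : 1 ≤ (k:ℝ) - 1 + ε := by linarith
  have h1 : regIncBeta (1/2) ((k:ℝ) - 1 + ε) (1 + ε)
      ≤ ((k:ℝ) - 1 + ε + 1) * (1/2:ℝ) ^ ((k:ℝ) - 1 + ε) :=
    term1_bound _ _ hu1 (by linarith) (by linarith)
  have hpow : (1/2:ℝ) ^ ((k:ℝ) - 1 + ε) ≤ (1/2:ℝ) ^ ((k:ℝ) - 1) :=
    Real.rpow_le_rpow_of_exponent_ge (by norm_num) (by norm_num) (by linarith)
  have h2 : ((k:ℝ) - 1 + ε + 1) * (1/2:ℝ) ^ ((k:ℝ) - 1 + ε)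
      ≤ ((k:ℝ) + 1) * (1/2:ℝ) ^ ((k:ℝ) - 1) := by
    apply mul_le_mul (by linarith) hpow (Real.rpow_nonneg (by norm_num) _) (by linarith)
  -- rewrite the nat power on the RHS
  have hnat : ((1:ℝ)/2) ^ (k - 1 : ℕ) = (1/2:ℝ) ^ ((k:ℝ) - 1) := by
    rw [← Real.rpow_natCast (1/2:ℝ) (k-1)]
    congr 1
    rw [Nat.cast_sub (by omega : 1 ≤ k), Nat.cast_one]
  -- final numeric inequality
  have he2 : (1:ℝ) ≤ Real.exp 1 ^ 2 := by
    nlinarith [Real.one_le_exp (by norm_num : (0:ℝ) ≤ 1)]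
  have hfin : ((k:ℝ) + 1) * (1/2:ℝ) ^ ((k:ℝ) - 1)
      ≤ 4 * Real.exp 1 ^ 2 * ((k:ℝ) * ((k:ℝ) + 1) / ((k:ℝ) - 1)) * (1/2:ℝ) ^ ((k:ℝ) - 1) := by
    apply mul_le_mul_of_nonneg_right _ (Real.rpow_nonneg (by norm_num) _)
    rw [show 4 * Real.exp 1 ^ 2 * ((k:ℝ) * ((k:ℝ) + 1) / ((k:ℝ) - 1))
        = (4 * Real.exp 1 ^ 2 * ((k:ℝ) * ((k:ℝ) + 1))) / ((k:ℝ) - 1) by ring,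
      le_div_iff₀ (by linarith : (0:ℝ) < (k:ℝ) - 1)]
    nlinarith [he2, hk1, mul_le_mul_of_nonneg_left he2
      (show (0:ℝ) ≤ 4 * ((k:ℝ) * ((k:ℝ) + 1)) by positivity)]
  rw [hnat]
  linarith
end

section
/- Let P(t) be a renewal process whose i.i.d. nonnegative holding times X have mean μ > 0 and finite moment generating function E[e^{θX}] < ∞ for |θ| < ε. Then there exist constants c > 0 and ε' > 0 such that for all t > 0 and all γ ∈ (0, ε'), P(|P(t) − t/μ| ≥ tγ/μ) ≤ 2 exp(−γ²μt/(8c)). -/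
open MeasureTheory ProbabilityTheory Real

lemma my_exp_le (u : ℝ) : Real.exp u ≤ 1 + u + u ^ 2 * Real.exp |u| := by
  have h3 : Real.exp u * Real.exp (-u) = 1 := by rw [← Real.exp_add]; simp
  rcases le_or_gt 0 u with hu | hu
  · rw [abs_of_nonneg hu]
    rcases le_or_gt 1 u with h1 | h1
    · have h4 : (0:ℝ) ≤ (u ^ 2 - 1) * Real.exp u :=
        mul_nonneg (by nlinarith) (Real.exp_pos u).le
      nlinarith [Real.exp_pos u]
    · have h2 : 1 - u ≤ Real.exp (-u) := by linarith [Real.add_one_le_exp (-u)]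
      have h5 : Real.exp u * (1 - u) ≤ 1 := by
        calc Real.exp u * (1 - u) ≤ Real.exp u * Real.exp (-u) := by
              exact mul_le_mul_of_nonneg_left h2 (Real.exp_pos u).le
          _ = 1 := h3
      nlinarith [Real.exp_pos u, mul_le_mul_of_nonneg_left h5 (by linarith : (0:ℝ) ≤ 1 + u)]
  · rw [abs_of_neg hu]
    have h2 : 1 - u ≤ Real.exp (-u) := by linarith [Real.add_one_le_exp (-u)]
    have h5 : Real.exp u * (1 - u) ≤ 1 := by
      calc Real.exp u * (1 - u) ≤ Real.exp u * Real.exp (-u) :=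
            mul_le_mul_of_nonneg_left h2 (Real.exp_pos u).le
        _ = 1 := h3
    have h6 : 1 + u ≤ Real.exp u := by linarith [Real.add_one_le_exp u]
    have h7 : u * (Real.exp u - 1) ≤ u ^ 2 := by nlinarith
    have h8 : u ^ 2 ≤ u ^ 2 * Real.exp (-u) := by nlinarith [sq_nonneg u]
    nlinarith

set_option maxHeartbeats 2000000 in
/-- Concentration of a renewal process: if the i.i.d. nonnegative holding times have
mean `μ > 0` and a moment generating function finite on `(-ε, ε)`, then there are
`c > 0` and `ε' > 0` such that for all `t > 0` and `γ ∈ (0, ε')`,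
`P(|N(t) − t/μ| ≥ tγ/μ) ≤ 2·exp(−γ²μt/(8c))`. -/
theorem renewal_process_concentration {Ω : Type*} [MeasurableSpace Ω] (P : Measure Ω)
    [IsProbabilityMeasure P] (X : ℕ → Ω → ℝ) (μ ε : ℝ) (hμ : 0 < μ) (hε : 0 < ε)
    (hmeas : ∀ i, Measurable (X i))
    (hindep : iIndepFun X P)
    (hident : ∀ i j, IdentDistrib (X i) (X j) P P)
    (hnonneg : ∀ i ω, 0 ≤ X i ω)
    (hmean : ∀ i, ∫ ω, X i ω ∂P = μ)
    (hmgf : ∀ θ : ℝ, |θ| < ε → Integrable (fun ω => Real.exp (θ * X 0 ω)) P)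
    -- `N t ω` is the renewal counting process: `n ≤ N t ω ↔ S_n ≤ t`.
    (N : ℝ → Ω → ℕ)
    (hN : ∀ t : ℝ, 0 ≤ t → ∀ ω : Ω, ∀ n : ℕ,
      n ≤ N t ω ↔ ∑ i ∈ Finset.range n, X i ω ≤ t) :
    ∃ c > (0:ℝ), ∃ ε' > (0:ℝ), ∀ t > (0:ℝ), ∀ γ ∈ Set.Ioo (0:ℝ) ε',
      P {ω | t * γ / μ ≤ |(N t ω : ℝ) - t / μ|}
        ≤ ENNReal.ofReal (2 * Real.exp (-(γ ^ 2 * μ * t) / (8 * c))) := by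
  -- basic integrability
  have hX0int : Integrable (X 0) P := by
    by_contra h
    have := hmean 0
    rw [integral_undef h] at this
    exact hμ.ne' this.symm
  set δ : ℝ := ε / 2 with hδdef
  have hδpos : 0 < δ := by positivity
  -- integrability of X² e^{δX}
  have hC0int : Integrable (fun ω => (X 0 ω) ^ 2 * Real.exp (δ * X 0 ω)) P := by
    have hint : Integrable (fun ω => (64 / ε ^ 2) * Real.exp ((3 * ε / 4) * X 0 ω)) P :=
      (hmgf (3 * ε / 4) (by rw [abs_of_nonneg (by positivity)]; linarith)).const_mul _
    refine hint.mono ?_ ?_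
    · exact (((hmeas 0).pow_const 2).mul ((hmeas 0).const_mul δ).exp).aestronglyMeasurable
    · refine Filter.Eventually.of_forall fun ω => ?_
      have hx : 0 ≤ X 0 ω := hnonneg 0 ω
      rw [Real.norm_eq_abs, Real.norm_eq_abs, abs_of_nonneg (by positivity),
        abs_of_nonneg (by positivity)]
      set v : ℝ := (ε / 4) * X 0 ω with hvdef
      have hv : 0 ≤ v := mul_nonneg (by positivity) hx
      have h2 : 1 + v / 2 ≤ Real.exp (v / 2) := by
        linarith [Real.add_one_le_exp (v / 2)]
      have h3 : Real.exp (v / 2) ^ 2 = Real.exp v := by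
        rw [sq, ← Real.exp_add]; ring_nf
      have h4 : (1 + v / 2) ^ 2 ≤ Real.exp v := by
        rw [← h3]; nlinarith [h2, hv]
      have h5 : (v / 2) ^ 2 ≤ Real.exp v := by nlinarith [h4, hv]
      have h1 : (X 0 ω) ^ 2 ≤ (64 / ε ^ 2) * Real.exp v := by
        have h6 : (X 0 ω) ^ 2 = (64 / ε ^ 2) * (v / 2) ^ 2 := by
          rw [hvdef]; field_simp; ring
        rw [h6]
        exact mul_le_mul_of_nonneg_left h5 (by positivity)
      have h7 : (X 0 ω) ^ 2 * Real.exp (δ * X 0 ω)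
          ≤ (64 / ε ^ 2) * Real.exp v * Real.exp (δ * X 0 ω) :=
        mul_le_mul_of_nonneg_right h1 (Real.exp_pos _).le
      have h8 : (64 / ε ^ 2) * Real.exp v * Real.exp (δ * X 0 ω)
          = (64 / ε ^ 2) * Real.exp ((3 * ε / 4) * X 0 ω) := by
        rw [mul_assoc, ← Real.exp_add, hvdef, hδdef]; ring_nf
      linarith [h7, h8.le, h8.ge]
  set C : ℝ := max (∫ ω, (X 0 ω) ^ 2 * Real.exp (δ * X 0 ω) ∂P) (max (μ ^ 2) 1) with hCdef
  have hC1 : (1:ℝ) ≤ C := le_trans (le_max_right _ _) (le_max_right _ _)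
  have hCpos : 0 < C := lt_of_lt_of_le one_pos hC1
  have hCμ : μ ^ 2 ≤ C := le_trans (le_max_left _ _) (le_max_right _ _)
  -- mgf bound
  have hmgf_bound : ∀ θ : ℝ, |θ| ≤ δ → mgf (X 0) P θ ≤ 1 + θ * μ + C * θ ^ 2 := by
    intro θ hθ
    have hθε : |θ| < ε := lt_of_le_of_lt hθ (by rw [hδdef]; linarith)
    have hintR : Integrable
        (fun ω => 1 + θ * X 0 ω + θ ^ 2 * ((X 0 ω) ^ 2 * Real.exp (δ * X 0 ω))) P :=
      ((integrable_const 1).add (hX0int.const_mul θ)).add (hC0int.const_mul (θ ^ 2))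
    have hle : mgf (X 0) P θ ≤
        ∫ ω, (1 + θ * X 0 ω + θ ^ 2 * ((X 0 ω) ^ 2 * Real.exp (δ * X 0 ω))) ∂P := by
      refine integral_mono (hmgf θ hθε) hintR fun ω => ?_
      have hx : 0 ≤ X 0 ω := hnonneg 0 ω
      have h1 := my_exp_le (θ * X 0 ω)
      have h2 : |θ * X 0 ω| = |θ| * X 0 ω := by
        rw [abs_mul, abs_of_nonneg hx]
      have h3 : Real.exp (|θ| * X 0 ω) ≤ Real.exp (δ * X 0 ω) := by
        apply Real.exp_le_exp.mpr
        exact mul_le_mul_of_nonneg_right hθ hx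
      calc Real.exp (θ * X 0 ω)
          ≤ 1 + θ * X 0 ω + (θ * X 0 ω) ^ 2 * Real.exp |θ * X 0 ω| := h1
        _ ≤ 1 + θ * X 0 ω + θ ^ 2 * ((X 0 ω) ^ 2 * Real.exp (δ * X 0 ω)) := by
            rw [h2]
            have : (θ * X 0 ω) ^ 2 * Real.exp (|θ| * X 0 ω)
                ≤ (θ * X 0 ω) ^ 2 * Real.exp (δ * X 0 ω) := by
              apply mul_le_mul_of_nonneg_left h3 (sq_nonneg _)
            nlinarith [this]
    have hint1 : Integrable (fun ω => 1 + θ * X 0 ω) P :=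
      (integrable_const 1).add (hX0int.const_mul θ)
    have hint2 : Integrable (fun ω => θ ^ 2 * ((X 0 ω) ^ 2 * Real.exp (δ * X 0 ω))) P :=
      hC0int.const_mul _
    have heq : ∫ ω, (1 + θ * X 0 ω + θ ^ 2 * ((X 0 ω) ^ 2 * Real.exp (δ * X 0 ω))) ∂P
        = 1 + θ * μ + θ ^ 2 * ∫ ω, (X 0 ω) ^ 2 * Real.exp (δ * X 0 ω) ∂P := by
      rw [integral_add hint1 hint2, integral_add (integrable_const 1) (hX0int.const_mul θ),
        integral_const, integral_const_mul, integral_const_mul, hmean 0]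
      simp
    rw [heq] at hle
    have : θ ^ 2 * ∫ ω, (X 0 ω) ^ 2 * Real.exp (δ * X 0 ω) ∂P ≤ C * θ ^ 2 := by
      rw [mul_comm]
      exact mul_le_mul_of_nonneg_right (le_max_left _ _) (sq_nonneg θ)
    linarith
  -- transfer to all i by identical distribution
  have hident_exp : ∀ (θ : ℝ) (i : ℕ),
      IdentDistrib (fun ω => Real.exp (θ * X i ω)) (fun ω => Real.exp (θ * X 0 ω)) P P :=
    fun θ i => (hident i 0).comp (Real.measurable_exp.comp (measurable_const_mul θ))
  have hint_i : ∀ (θ : ℝ), |θ| < ε → ∀ i, Integrable (fun ω => Real.exp (θ * X i ω)) P :=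
    fun θ hθ i => (hident_exp θ i).integrable_iff.mpr (hmgf θ hθ)
  have hSint : ∀ (θ : ℝ), |θ| < ε → ∀ n : ℕ,
      Integrable (fun ω => Real.exp (θ * (∑ i ∈ Finset.range n, X i) ω)) P :=
    fun θ hθ n => hindep.integrable_exp_mul_sum hmeas (fun i _ => hint_i θ hθ i)
  have hSmgf : ∀ (θ : ℝ), |θ| ≤ δ → ∀ n : ℕ,
      mgf (∑ i ∈ Finset.range n, X i) P θ ≤ Real.exp (n * (θ * μ + C * θ ^ 2)) := by
    intro θ hθ n
    rw [hindep.mgf_sum hmeas (Finset.range n)]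
    have h1 : ∀ i ∈ Finset.range n, mgf (X i) P θ = mgf (X 0) P θ := by
      intro i _
      exact (hident_exp θ i).integral_eq
    rw [Finset.prod_congr rfl h1, Finset.prod_const, Finset.card_range]
    have h2 : mgf (X 0) P θ ≤ Real.exp (θ * μ + C * θ ^ 2) := by
      refine (hmgf_bound θ hθ).trans ?_
      linarith [Real.add_one_le_exp (θ * μ + C * θ ^ 2)]
    calc mgf (X 0) P θ ^ n ≤ Real.exp (θ * μ + C * θ ^ 2) ^ n :=
          pow_le_pow_left₀ mgf_nonneg h2 n
      _ = Real.exp (n * (θ * μ + C * θ ^ 2)) := (Real.exp_nat_mul _ n).symm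
  -- Chernoff bounds
  have chernoff_low : ∀ (θ : ℝ), 0 < θ → θ ≤ δ → ∀ (n : ℕ) (a : ℝ),
      (P {ω | (∑ i ∈ Finset.range n, X i) ω ≤ a}).toReal
        ≤ Real.exp (θ * a + n * (-θ * μ + C * θ ^ 2)) := by
    intro θ hθpos hθδ n a
    have hδε : δ < ε := by rw [hδdef]; linarith
    have habs : |(-θ)| < ε := by rw [abs_neg, abs_of_pos hθpos]; linarith
    have h1 := measure_le_le_exp_mul_mgf (X := (∑ i ∈ Finset.range n, X i)) (μ := P) a
      (neg_nonpos.mpr hθpos.le) (hSint (-θ) habs n)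
    refine h1.trans ?_
    rw [Real.exp_add]
    have h2 : mgf (∑ i ∈ Finset.range n, X i) P (-θ)
        ≤ Real.exp (n * (-θ * μ + C * θ ^ 2)) := by
      have := hSmgf (-θ) (by rw [abs_neg, abs_of_pos hθpos]; linarith) n
      simpa using this
    have h3 : Real.exp (- -θ * a) = Real.exp (θ * a) := by ring_nf
    rw [h3]
    exact mul_le_mul_of_nonneg_left h2 (Real.exp_pos _).le
  have chernoff_high : ∀ (θ : ℝ), 0 < θ → θ ≤ δ → ∀ (n : ℕ) (a : ℝ),
      (P {ω | a ≤ (∑ i ∈ Finset.range n, X i) ω}).toReal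
        ≤ Real.exp (-θ * a + n * (θ * μ + C * θ ^ 2)) := by
    intro θ hθpos hθδ n a
    have hδε : δ < ε := by rw [hδdef]; linarith
    have habs : |θ| < ε := by rw [abs_of_pos hθpos]; linarith
    have h1 := measure_ge_le_exp_mul_mgf (X := (∑ i ∈ Finset.range n, X i)) (μ := P) a
      hθpos.le (hSint θ habs n)
    refine h1.trans ?_
    rw [Real.exp_add]
    exact mul_le_mul_of_nonneg_left
      (hSmgf θ (by rw [abs_of_pos hθpos]; linarith) n) (Real.exp_pos _).le
  -- choose constants
  refine ⟨16 * C, by positivity, min 1 (4 * C * ε / μ), by positivity, ?_⟩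
  intro t ht γ hγ
  obtain ⟨hγ0, hγ'⟩ := hγ
  have hγ1 : γ < 1 := lt_of_lt_of_le hγ' (min_le_left _ _)
  have hγε : γ ≤ 4 * C * ε / μ := le_of_lt (lt_of_lt_of_le hγ' (min_le_right _ _))
  set θ : ℝ := γ * μ / (8 * C) with hθdef
  have hθpos : 0 < θ := by positivity
  have hθδ : θ ≤ δ := by
    rw [le_div_iff₀ hμ] at hγε
    rw [hθdef, hδdef, div_le_iff₀ (by positivity : (0:ℝ) < 8 * C)]
    nlinarith [hγε]
  have hCθ : C * θ = γ * μ / 8 := by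
    rw [hθdef]; field_simp
  have hCθ2 : C * θ ^ 2 = γ * μ * θ / 8 := by
    rw [sq, ← mul_assoc, hCθ]; ring
  -- events
  set n₁ : ℕ := ⌈(t + t * γ) / μ⌉₊ with hn₁def
  set m : ℕ := ⌊(t - t * γ) / μ⌋₊ + 1 with hmdef
  set A : Set Ω := {ω | (∑ i ∈ Finset.range n₁, X i) ω ≤ t} with hAdef
  set B : Set Ω := {ω | t ≤ (∑ i ∈ Finset.range m, X i) ω} with hBdef
  have hsub : {ω | t * γ / μ ≤ |(N t ω : ℝ) - t / μ|} ⊆ A ∪ B := by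
    intro ω hω
    simp only [Set.mem_setOf_eq] at hω
    rcases le_abs.mp hω with h | h
    · left
      have h1 : (t + t * γ) / μ ≤ (N t ω : ℝ) := by
        rw [add_div]; linarith [h]
      have h2 : n₁ ≤ N t ω := Nat.ceil_le.mpr h1
      have h3 := (hN t ht.le ω n₁).mp h2
      simpa [hAdef, Finset.sum_apply] using h3
    · right
      have h1 : (N t ω : ℝ) ≤ (t - t * γ) / μ := by
        rw [sub_div]; linarith [h]
      have h2 : N t ω ≤ ⌊(t - t * γ) / μ⌋₊ := Nat.le_floor h1
      have h3 : ¬ (m ≤ N t ω) := by omega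
      have h4 : ¬ (∑ i ∈ Finset.range m, X i ω ≤ t) := fun hs => h3 ((hN t ht.le ω m).mpr hs)
      have h5 : t < ∑ i ∈ Finset.range m, X i ω := not_le.mp h4
      simpa [hBdef, Finset.sum_apply] using h5.le
  have hn₁low : (t + t * γ) / μ ≤ (n₁ : ℝ) := Nat.le_ceil _
  have hmup : (m : ℝ) ≤ (t - t * γ) / μ + 1 := by
    have h0 : 0 ≤ (t - t * γ) / μ := div_nonneg (by nlinarith) hμ.le
    have h1 := Nat.floor_le h0
    rw [hmdef]; push_cast; linarith
  -- upper tail bound (always)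
  have hA : (P A).toReal ≤ Real.exp (-(γ ^ 2 * μ * t) / (8 * (16 * C))) := by
    refine (chernoff_low θ hθpos hθδ n₁ t).trans ?_
    rw [Real.exp_le_exp]
    have hcoef : -θ * μ + C * θ ^ 2 ≤ 0 := by
      nlinarith [hCθ2, mul_pos (mul_pos hθpos hμ) (by linarith : (0:ℝ) < 1 - γ / 8)]
    have hstep : (n₁ : ℝ) * (-θ * μ + C * θ ^ 2)
        ≤ ((t + t * γ) / μ) * (-θ * μ + C * θ ^ 2) :=
      mul_le_mul_of_nonpos_right hn₁low hcoef
    have hs : ((t + t * γ) / μ) * μ = t + t * γ := div_mul_cancel₀ _ hμ.ne'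
    have e1 : ((t + t * γ) / μ) * (-θ * μ + C * θ ^ 2)
        = (t + t * γ) * (θ * (γ / 8 - 1)) := by
      have h1 : -θ * μ + C * θ ^ 2 = μ * (θ * (γ / 8 - 1)) := by
        rw [hCθ2]; ring
      rw [h1]; field_simp
    have e2 : -(γ ^ 2 * μ * t) / (8 * (16 * C)) = -(γ * θ) * t / 16 := by
      rw [hθdef]; field_simp [hCpos.ne']
    rw [e2]
    have hfin : θ * t + (t + t * γ) * (θ * (γ / 8 - 1)) ≤ -(γ * θ) * t / 16 := by
      nlinarith [mul_nonneg (mul_nonneg (mul_nonneg ht.le hγ0.le) hθpos.le)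
          (by linarith : (0:ℝ) ≤ 1 - γ),
        mul_nonneg (mul_nonneg ht.le hγ0.le) hθpos.le]
    linarith [hstep, e1]
  have hAbound : P A ≤ ENNReal.ofReal (Real.exp (-(γ ^ 2 * μ * t) / (8 * (16 * C)))) := by
    rw [← ENNReal.ofReal_toReal (measure_ne_top P A)]
    exact ENNReal.ofReal_le_ofReal hA
  rcases le_or_gt (γ ^ 2 * μ * t) (128 * C * Real.log 2) with hcase | hcase
  · -- trivial regime
    refine le_trans prob_le_one ?_
    rw [← ENNReal.ofReal_one]
    apply ENNReal.ofReal_le_ofReal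
    have hx : -Real.log 2 ≤ -(γ ^ 2 * μ * t) / (8 * (16 * C)) := by
      rw [neg_div, neg_le_neg_iff, div_le_iff₀ (by positivity : (0:ℝ) < 8 * (16 * C))]
      nlinarith [hcase]
    calc (1:ℝ) = 2 * Real.exp (-Real.log 2) := by
          rw [Real.exp_neg, Real.exp_log two_pos]; norm_num
      _ ≤ 2 * Real.exp (-(γ ^ 2 * μ * t) / (8 * (16 * C))) := by
          gcongr
  · -- concentration regime: bound lower tail too
    have h64 : 64 * μ ^ 2 ≤ 128 * C * Real.log 2 := by
      have hl := Real.log_two_gt_d9.le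
      nlinarith [hCμ, hCpos, mul_le_mul_of_nonneg_left hl (by positivity : (0:ℝ) ≤ 128 * C)]
    have hγt : 2 * μ ≤ γ * t := by
      have h1 : 64 * μ ^ 2 < γ ^ 2 * μ * t := lt_of_le_of_lt h64 hcase
      nlinarith [mul_pos hγ0 hμ, mul_pos hμ hμ,
        mul_nonneg (sub_nonneg.mpr hγ1.le) (sq_nonneg μ)]
    have hB : (P B).toReal ≤ Real.exp (-(γ ^ 2 * μ * t) / (8 * (16 * C))) := by
      refine (chernoff_high θ hθpos hθδ m t).trans ?_
      rw [Real.exp_le_exp]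
      have hcoefp : 0 ≤ θ * μ + C * θ ^ 2 := by positivity
      have hstep : (m : ℝ) * (θ * μ + C * θ ^ 2)
          ≤ ((t - t * γ) / μ + 1) * (θ * μ + C * θ ^ 2) :=
        mul_le_mul_of_nonneg_right hmup hcoefp
      have hs : ((t - t * γ) / μ) * μ = t - t * γ := div_mul_cancel₀ _ hμ.ne'
      have e1 : ((t - t * γ) / μ + 1) * (θ * μ + C * θ ^ 2)
          = (t - t * γ) * (θ * (1 + γ / 8)) + μ * (θ * (1 + γ / 8)) := by
        have h1 : θ * μ + C * θ ^ 2 = μ * (θ * (1 + γ / 8)) := by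
          rw [hCθ2]; ring
        rw [h1]; field_simp
      have e2 : -(γ ^ 2 * μ * t) / (8 * (16 * C)) = -(γ * θ) * t / 16 := by
        rw [hθdef]; field_simp [hCpos.ne']
      rw [e2]
      have hfin : -θ * t + ((t - t * γ) * (θ * (1 + γ / 8)) + μ * (θ * (1 + γ / 8)))
          ≤ -(γ * θ) * t / 16 := by
        nlinarith [mul_le_mul_of_nonneg_right hγt hθpos.le,
          mul_nonneg (mul_nonneg hμ.le hθpos.le) (by linarith : (0:ℝ) ≤ 1 - γ),
          mul_nonneg (mul_nonneg (mul_nonneg ht.le hγ0.le) hγ0.le) hθpos.le]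
      linarith [hstep, e1]
    have hBbound : P B ≤ ENNReal.ofReal (Real.exp (-(γ ^ 2 * μ * t) / (8 * (16 * C)))) := by
      rw [← ENNReal.ofReal_toReal (measure_ne_top P B)]
      exact ENNReal.ofReal_le_ofReal hB
    calc P {ω | t * γ / μ ≤ |(N t ω : ℝ) - t / μ|} ≤ P (A ∪ B) := measure_mono hsub
      _ ≤ P A + P B := measure_union_le A B
      _ ≤ ENNReal.ofReal (Real.exp (-(γ ^ 2 * μ * t) / (8 * (16 * C))))
          + ENNReal.ofReal (Real.exp (-(γ ^ 2 * μ * t) / (8 * (16 * C)))) :=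
        add_le_add hAbound hBbound
      _ = ENNReal.ofReal (2 * Real.exp (-(γ ^ 2 * μ * t) / (8 * (16 * C)))) := by
        rw [← ENNReal.ofReal_add (Real.exp_nonneg _) (Real.exp_nonneg _)]
        congr 1
        ring
end
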